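/- Fenchel-type identity for the trace of the inverse: (a) For every real symmetric positive definite n×n matrix X, sup{ −Tr(XM) + 2·Tr(√M) : M real symmetric, M ≻ 0 } = Tr(X⁻¹), and the supremum is attained uniquely at M = X⁻². (b) If X is real symmetric but not positive definite, then this supremum equals +∞. -/

import Mathlib

open Matrix

noncomputable section

open scoped Classical

/-- The positive semidefinite square root of a positive semidefinite real symmetric
matrix (junk value `0` if the matrix is not positive semidefinite). -/
def psdSqrt {n : Type*} [Fintype n] [DecidableEq n] (A : Matrix n n ℝ) : Matrix n n ℝ :=
  if h : A.PosSemidef then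
    (h.1.eigenvectorUnitary : Matrix n n ℝ) * diagonal ((↑) ∘ Real.sqrt ∘ h.1.eigenvalues) *
      (star h.1.eigenvectorUnitary : Matrix n n ℝ)
  else 0

open scoped MatrixOrder in
lemma psdSqrt_eq_cfc {n : Type*} [Fintype n] [DecidableEq n] {M : Matrix n n ℝ}
    (hM : M.PosSemidef) : psdSqrt M = CFC.sqrt M := by
  rw [psdSqrt, dif_pos hM, CFC.sqrt_eq_cfc, cfc_nnreal_eq_real _ M, hM.1.cfc_eq]
  simp only [IsHermitian.cfc, Real.coe_sqrt, Real.coe_toNNReal']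
  congr 2
  funext i
  congr 1
  congr 1
  funext j
  simp only [Function.comp_apply, max_eq_left (hM.eigenvalues_nonneg j)]


open scoped MatrixOrder in
lemma psdSqrt_eq {n : Type*} [Fintype n] [DecidableEq n] {M N : Matrix n n ℝ}
    (hN : N.PosSemidef) (h : N * N = M) : psdSqrt M = N := by
  have hM : M.PosSemidef := by rw [← h, ← pow_two]; exact hN.pow 2
  rw [psdSqrt_eq_cfc hM, ← h]
  exact CFC.sqrt_mul_self N hN.nonneg

open scoped MatrixOrder in
lemma psdSqrt_posSemidef {n : Type*} [Fintype n] [DecidableEq n] {M : Matrix n n ℝ}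
    (hM : M.PosSemidef) : (psdSqrt M).PosSemidef := by
  rw [psdSqrt_eq_cfc hM]; exact Matrix.nonneg_iff_posSemidef.mp (CFC.sqrt_nonneg M)

open scoped MatrixOrder in
lemma psdSqrt_mul_self {n : Type*} [Fintype n] [DecidableEq n] {M : Matrix n n ℝ}
    (hM : M.PosSemidef) : psdSqrt M * psdSqrt M = M := by
  rw [psdSqrt_eq_cfc hM]; exact CFC.sqrt_mul_sqrt_self M hM.nonneg

lemma psdSqrt_transpose {n : Type*} [Fintype n] [DecidableEq n] {M : Matrix n n ℝ}
    (hM : M.PosSemidef) : (psdSqrt M)ᵀ = psdSqrt M := by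
  have := (psdSqrt_posSemidef hM).isHermitian
  rwa [IsHermitian, conjTranspose_eq_transpose_of_trivial] at this

lemma trace_mul_transpose_self {n : Type*} [Fintype n] (B : Matrix n n ℝ) :
    (B * Bᵀ).trace = ∑ i, ∑ j, (B i j)^2 := by
  simp [Matrix.trace, Matrix.mul_apply, Matrix.diag, sq]

lemma trace_mul_transpose_self_nonneg {n : Type*} [Fintype n] (B : Matrix n n ℝ) :
    0 ≤ (B * Bᵀ).trace := by
  rw [trace_mul_transpose_self]
  positivity

lemma eq_zero_of_trace_mul_transpose_self {n : Type*} [Fintype n] {B : Matrix n n ℝ}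
    (h : (B * Bᵀ).trace = 0) : B = 0 := by
  rw [trace_mul_transpose_self] at h
  ext i j
  have h1 : ∀ i ∈ Finset.univ, (0:ℝ) ≤ ∑ j, (B i j)^2 := fun i _ => by positivity
  have h2 := (Finset.sum_eq_zero_iff_of_nonneg h1).1 h i (Finset.mem_univ i)
  have h3 : ∀ j ∈ Finset.univ, (0:ℝ) ≤ (B i j)^2 := fun j _ => by positivity
  have := (Finset.sum_eq_zero_iff_of_nonneg h3).1 h2 j (Finset.mem_univ j)
  have h4 : B i j = 0 := pow_eq_zero_iff two_ne_zero |>.1 this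
  simp [h4]
open Matrix
section
variable {n : Type*} [Fintype n] [DecidableEq n]

lemma posDef_sq {A : Matrix n n ℝ} (hA : A.PosDef) : (A * A).PosDef := by
  have hdet : IsUnit A.det := hA.isUnit.map detMonoidHom
  refine Matrix.PosDef.of_dotProduct_mulVec_pos ?_ (fun x hx => ?_)
  · rw [IsHermitian, conjTranspose_mul, hA.isHermitian.eq]
  · have hy : A *ᵥ x ≠ 0 := by
      intro h
      apply hx
      have := congrArg (A⁻¹ *ᵥ ·) h
      simpa [Matrix.mulVec_mulVec, Matrix.nonsing_inv_mul A hdet] using this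
    have key : star x ⬝ᵥ (A * A) *ᵥ x = star (A *ᵥ x) ⬝ᵥ (A *ᵥ x) := by
      rw [← Matrix.mulVec_mulVec, Matrix.dotProduct_mulVec (star x), star_mulVec,
        hA.isHermitian.eq, ← Matrix.dotProduct_mulVec]
    rw [key]
    simpa [dotProduct, star_trivial, ← sq] using
      Finset.sum_pos' (fun i _ => sq_nonneg _)
        (by obtain ⟨i, hi⟩ := Function.ne_iff.1 hy; exact ⟨i, Finset.mem_univ i, by exact sq_pos_of_ne_zero hi⟩)
end

section
variable {n : Type*} [Fintype n] [DecidableEq n]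

lemma gap_identity {X M : Matrix n n ℝ} (hX : X.PosDef) (hM : M.PosDef) :
    ((psdSqrt X * psdSqrt M - (psdSqrt X)⁻¹) *
      (psdSqrt X * psdSqrt M - (psdSqrt X)⁻¹)ᵀ).trace
      = (X * M).trace - 2 * (psdSqrt M).trace + (X⁻¹).trace := by
  set A := psdSqrt X with hAdef
  set S := psdSqrt M with hSdef
  have hA : A.PosSemidef := psdSqrt_posSemidef hX.posSemidef
  have hS : S.PosSemidef := psdSqrt_posSemidef hM.posSemidef
  have hAX : A * A = X := psdSqrt_mul_self hX.posSemidef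
  have hSM : S * S = M := psdSqrt_mul_self hM.posSemidef
  have hAt : Aᵀ = A := psdSqrt_transpose hX.posSemidef
  have hSt : Sᵀ = S := psdSqrt_transpose hM.posSemidef
  have hdet : IsUnit A.det := by
    have : IsUnit X.det := hX.isUnit.map detMonoidHom
    rw [← hAX, det_mul] at this
    exact (IsUnit.mul_iff.1 this).1
  have hinv1 : A * A⁻¹ = 1 := mul_nonsing_inv A hdet
  have hinv2 : A⁻¹ * A = 1 := nonsing_inv_mul A hdet
  have hAit : (A⁻¹)ᵀ = A⁻¹ := by rw [transpose_nonsing_inv, hAt]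
  have expand : (A * S - A⁻¹) * (A * S - A⁻¹)ᵀ
      = A * (S * S) * A - A * S * A⁻¹ - A⁻¹ * (S * A) + A⁻¹ * A⁻¹ := by
    rw [transpose_sub, transpose_mul, hAt, hSt, hAit]
    noncomm_ring
  rw [expand, hSM]
  have t1 : (A * M * A).trace = (X * M).trace := by
    rw [trace_mul_cycle, hAX]
  have t2 : (A * S * A⁻¹).trace = S.trace := by
    rw [trace_mul_cycle, hinv2, Matrix.one_mul]
  have t3 : (A⁻¹ * (S * A)).trace = S.trace := by
    rw [trace_mul_comm, Matrix.mul_assoc, hinv1, Matrix.mul_one]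
  have t4 : (A⁻¹ * A⁻¹).trace = (X⁻¹).trace := by
    rw [← hAX, Matrix.mul_inv_rev]
  rw [trace_add, trace_sub, trace_sub, t1, t2, t3, t4]
  ring
end

section
variable {n : Type*} [Fintype n] [DecidableEq n]

lemma vecMulVec_posSemidef (u : n → ℝ) : (vecMulVec u u).PosSemidef := by
  refine Matrix.PosSemidef.of_dotProduct_mulVec_nonneg ?_ (fun x => ?_)
  · ext i j
    simp [vecMulVec_apply, conjTranspose_apply, mul_comm]
  · have : star x ⬝ᵥ (vecMulVec u u) *ᵥ x = (u ⬝ᵥ x) * (u ⬝ᵥ x) := by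
      simp [dotProduct, Matrix.mulVec, vecMulVec_apply, Finset.mul_sum,
        Finset.sum_mul, mul_assoc, mul_comm, mul_left_comm]
    rw [this]
    exact mul_self_nonneg _

lemma vecMulVec_mul_vecMulVec_self (u : n → ℝ) (hu : ∑ i, u i * u i = 1) :
    vecMulVec u u * vecMulVec u u = vecMulVec u u := by
  ext i j
  simp only [Matrix.mul_apply, vecMulVec_apply]
  calc ∑ k, u i * u k * (u k * u j) = u i * u j * ∑ k, u k * u k := by
        rw [Finset.mul_sum]; congr 1; ext k; ring
    _ = u i * u j := by rw [hu, mul_one]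
  
lemma vecMulVec_trace (u : n → ℝ) : (vecMulVec u u).trace = ∑ i, u i * u i := by
  simp [Matrix.trace, Matrix.diag, vecMulVec_apply]

lemma trace_mul_vecMulVec (X : Matrix n n ℝ) (u : n → ℝ) :
    (X * vecMulVec u u).trace = u ⬝ᵥ X *ᵥ u := by
  simp only [Matrix.trace, Matrix.diag, Matrix.mul_apply, vecMulVec_apply,
    dotProduct, Matrix.mulVec]
  congr 1; ext i
  rw [Finset.mul_sum]
  congr 1; ext k; ring
end

section
variable {n : Type*} [Fintype n] [DecidableEq n]

lemma smul_vecMulVec_posSemidef {a : ℝ} (ha : 0 ≤ a) (u : n → ℝ) :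
    (a • vecMulVec u u).PosSemidef := by
  have h : a • vecMulVec u u = vecMulVec (Real.sqrt a • u) (Real.sqrt a • u) := by
    ext i j
    simp only [Matrix.smul_apply, vecMulVec_apply, Pi.smul_apply, smul_eq_mul]
    rw [show Real.sqrt a * u i * (Real.sqrt a * u j)
      = (Real.sqrt a * Real.sqrt a) * (u i * u j) by ring, Real.mul_self_sqrt ha]
  rw [h]
  exact vecMulVec_posSemidef _

lemma eq_inv_sq_of_gap_zero {X M : Matrix n n ℝ} (hX : X.PosDef) (hM : M.PosDef)
    (h : psdSqrt X * psdSqrt M - (psdSqrt X)⁻¹ = 0) : M = X⁻¹ * X⁻¹ := by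
  set A := psdSqrt X
  set S := psdSqrt M
  have hAX : A * A = X := psdSqrt_mul_self hX.posSemidef
  have hSM : S * S = M := psdSqrt_mul_self hM.posSemidef
  have hdet : IsUnit A.det := by
    have : IsUnit X.det := hX.isUnit.map detMonoidHom
    rw [← hAX, det_mul] at this
    exact (IsUnit.mul_iff.1 this).1
  have hAS : A * S = A⁻¹ := by rwa [sub_eq_zero] at h
  have hS : S = X⁻¹ := by
    have := congrArg (A⁻¹ * ·) hAS
    simpa [← Matrix.mul_assoc, nonsing_inv_mul A hdet, ← hAX, Matrix.mul_inv_rev] using this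
  rw [← hSM, hS]
end


/-- Fenchel-type identity for the trace of the inverse:
(a) if `X ≻ 0` then `sup {−Tr(XM) + 2 Tr(√M) : M ≻ 0} = Tr(X⁻¹)`, attained uniquely at
`M = X⁻²`; (b) if `X` is symmetric but not positive definite, the supremum is `+∞`. -/
theorem stmt_9 {n : ℕ} (X : Matrix (Fin n) (Fin n) ℝ) :
    (X.PosDef →
      IsGreatest
          {v : ℝ | ∃ M : Matrix (Fin n) (Fin n) ℝ, M.PosDef ∧
            v = -(X * M).trace + 2 * (psdSqrt M).trace}
          (X⁻¹).trace ∧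
        (-(X * (X⁻¹ * X⁻¹)).trace + 2 * (psdSqrt (X⁻¹ * X⁻¹)).trace = (X⁻¹).trace) ∧
        ∀ M : Matrix (Fin n) (Fin n) ℝ, M.PosDef →
          -(X * M).trace + 2 * (psdSqrt M).trace = (X⁻¹).trace → M = X⁻¹ * X⁻¹) ∧
      (X.IsHermitian → ¬X.PosDef →
        ¬BddAbove {v : ℝ | ∃ M : Matrix (Fin n) (Fin n) ℝ, M.PosDef ∧
          v = -(X * M).trace + 2 * (psdSqrt M).trace}) := by
  constructor
  · intro hX
    have hXdet : IsUnit X.det := hX.isUnit.map detMonoidHom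
    have hXinv : X⁻¹.PosDef := hX.inv
    have hM0 : (X⁻¹ * X⁻¹).PosDef := posDef_sq hXinv
    have hsq : psdSqrt (X⁻¹ * X⁻¹) = X⁻¹ := psdSqrt_eq hXinv.posSemidef rfl
    have hval : -(X * (X⁻¹ * X⁻¹)).trace + 2 * (psdSqrt (X⁻¹ * X⁻¹)).trace = (X⁻¹).trace := by
      rw [hsq, ← Matrix.mul_assoc, Matrix.mul_nonsing_inv X hXdet, Matrix.one_mul]
      ring
    have hub : ∀ M : Matrix (Fin n) (Fin n) ℝ, M.PosDef →
        -(X * M).trace + 2 * (psdSqrt M).trace ≤ (X⁻¹).trace := by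
      intro M hM
      have hid := gap_identity hX hM
      have h0 := trace_mul_transpose_self_nonneg
        (psdSqrt X * psdSqrt M - (psdSqrt X)⁻¹)
      linarith [hid ▸ h0]
    have huniq : ∀ M : Matrix (Fin n) (Fin n) ℝ, M.PosDef →
        -(X * M).trace + 2 * (psdSqrt M).trace = (X⁻¹).trace → M = X⁻¹ * X⁻¹ := by
      intro M hM heq
      apply eq_inv_sq_of_gap_zero hX hM
      apply eq_zero_of_trace_mul_transpose_self
      rw [gap_identity hX hM]
      linarith
    exact ⟨⟨⟨X⁻¹ * X⁻¹, hM0, hval.symm⟩, fun v ⟨M, hM, hv⟩ => hv ▸ hub M hM⟩, hval, huniq⟩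
  · intro hH hP hbdd
    obtain ⟨C, hC⟩ := hbdd
    have hex : ∃ x : Fin n → ℝ, x ≠ 0 ∧ x ⬝ᵥ X *ᵥ x ≤ 0 := by
      by_contra h
      push_neg at h
      exact hP (Matrix.PosDef.of_dotProduct_mulVec_pos hH fun x hx => by simpa [star_trivial] using h x hx)
    obtain ⟨v, hv0, hvq⟩ := hex
    set c : ℝ := ∑ i, v i * v i with hcdef
    have hc : 0 < c := by
      obtain ⟨i, hi⟩ := Function.ne_iff.1 hv0
      exact Finset.sum_pos' (fun j _ => mul_self_nonneg _)
        ⟨i, Finset.mem_univ i, mul_self_pos.2 hi⟩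
    set s : ℝ := (Real.sqrt c)⁻¹ with hsdef
    have hs : 0 < s := inv_pos.2 (Real.sqrt_pos.2 hc)
    set u : Fin n → ℝ := s • v with hudef
    have hu : ∑ i, u i * u i = 1 := by
      have : ∑ i, u i * u i = (s * s) * c := by
        rw [hcdef, Finset.mul_sum]
        exact Finset.sum_congr rfl fun i _ => by simp [hudef, smul_eq_mul]; ring
      rw [this, hsdef, ← Real.sqrt_inv]
      rw [Real.mul_self_sqrt (by positivity)]
      field_simp
    have hq : u ⬝ᵥ X *ᵥ u ≤ 0 := by
      have : u ⬝ᵥ X *ᵥ u = (s * s) * (v ⬝ᵥ X *ᵥ v) := by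
        simp [hudef, Matrix.mulVec_smul, smul_dotProduct, dotProduct_smul, smul_eq_mul]
        ring
      rw [this]
      have : 0 ≤ s * s := mul_self_nonneg s
      nlinarith
    set P := vecMulVec u u with hPdef
    have hPP : P * P = P := vecMulVec_mul_vecMulVec_self u hu
    set r : ℝ := max 0 ((C + X.trace - 2 * (n : ℝ) + 2) / 2) with hrdef
    have hr : 0 ≤ r := le_max_left _ _
    set N : Matrix (Fin n) (Fin n) ℝ := 1 + r • P with hNdef
    set M : Matrix (Fin n) (Fin n) ℝ := 1 + (2 * r + r ^ 2) • P with hMdef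
    have hNsq : N * N = M := by
      simp only [hNdef, hMdef, Matrix.add_mul, Matrix.mul_add, Matrix.one_mul,
        Matrix.mul_one, Matrix.mul_smul, Matrix.smul_mul, hPP, smul_smul]
      module
    have hNpsd : N.PosSemidef := by
      rw [hNdef]
      exact Matrix.PosSemidef.add (Matrix.PosSemidef.one) (smul_vecMulVec_posSemidef hr u)
    have hMpos : M.PosDef := by
      rw [hMdef]
      exact Matrix.PosDef.add_posSemidef Matrix.PosDef.one
        (smul_vecMulVec_posSemidef (by positivity) u)
    have hsqM : psdSqrt M = N := psdSqrt_eq hNpsd hNsq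
    have htr1 : (X * M).trace = X.trace + (2 * r + r ^ 2) * (u ⬝ᵥ X *ᵥ u) := by
      rw [hMdef, Matrix.mul_add, Matrix.trace_add, Matrix.mul_one, Matrix.mul_smul,
        Matrix.trace_smul, trace_mul_vecMulVec, smul_eq_mul]
    have htr2 : N.trace = (n : ℝ) + r := by
      rw [hNdef, Matrix.trace_add, Matrix.trace_one, Matrix.trace_smul, vecMulVec_trace, hu,
        smul_eq_mul]
      simp
    have hmem : -(X * M).trace + 2 * (psdSqrt M).trace ≤ C :=
      hC ⟨M, hMpos, rfl⟩
    rw [hsqM, htr1, htr2] at hmem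
    have hrge : (C + X.trace - 2 * (n : ℝ) + 2) / 2 ≤ r := le_max_right _ _
    nlinarith [mul_nonneg (by positivity : (0:ℝ) ≤ 2 * r + r ^ 2) (neg_nonneg.2 hq)]
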